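/- arXiv:2502.09979 — 3 statements merged into one kernel-verified Lean document; each statement's English description precedes it below -/
import Mathlib

section
/- Let ϕ ∈ [−π,π] and φ ∈ [0,π]. Then for the points x(φ,0) and x(φ,ϕ) on the unit sphere one has d(x(φ,0), x(φ,ϕ)) = arccos(1 + (cos ϕ − 1) sin²φ) ≥ √(1 − ϕ²/12) · |ϕ| · sinφ. -/
open MeasureTheory Real Set Filter
open scoped BigOperators Classical

noncomputable section

abbrev E3 : Type := EuclideanSpace ℝ (Fin 3)

/-- The unit sphere `S²` as a subset of `ℝ³`. -/
def S2 : Set E3 := Metric.sphere 0 1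

/-- Geodesic distance `d(x,y) = arccos ⟨x,y⟩₂`. -/
def gd (x y : E3) : ℝ := Real.arccos (inner ℝ x y)

/-- Distance from a point to a set, `d(x,B) = inf_{b ∈ B} d(x,b)`. -/
def gdSet (x : E3) (B : Set E3) : ℝ := sInf (gd x '' B)

/-- Spherical cap `C(z,φ) = {x ∈ S² : d(x,z) < φ}`. -/
def cap (z : E3) (φc : ℝ) : Set E3 := {x | x ∈ S2 ∧ gd x z < φc}

/-- Boundary circle `∂C(z,φ) = {x ∈ S² : d(x,z) = φ}` of a spherical cap. -/
def capBd (z : E3) (φc : ℝ) : Set E3 := {x | x ∈ S2 ∧ gd x z = φc}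

/-- Boundary of a subset of the sphere, relative to the sphere. -/
def sphFrontier (A : Set E3) : Set E3 := closure A ∩ closure (S2 \ A)

/-- Cross product in `ℝ³`. -/
def cross3 (u v : E3) : E3 :=
  (EuclideanSpace.equiv (Fin 3) ℝ).symm
    ![u 1 * v 2 - u 2 * v 1, u 2 * v 0 - u 0 * v 2, u 0 * v 1 - u 1 * v 0]

/-- Counterclockwise rotation `R_x(ξ)` by an angle `ξ` about the axis `x`
(Rodrigues formula), applied to `v`. -/
def rotAxis (x : E3) (ξ : ℝ) (v : E3) : E3 :=
  Real.cos ξ • v + Real.sin ξ • cross3 x v + ((1 - Real.cos ξ) * (inner ℝ x v : ℝ)) • x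

/-- `R ∈ SO(3)`. -/
def SO3 (R : Matrix (Fin 3) (Fin 3) ℝ) : Prop := R * R.transpose = 1 ∧ R.det = 1

/-- Action of a `3×3` matrix on `ℝ³`. -/
def act (R : Matrix (Fin 3) (Fin 3) ℝ) (y : E3) : E3 :=
  (EuclideanSpace.equiv (Fin 3) ℝ).symm (R.mulVec (EuclideanSpace.equiv (Fin 3) ℝ y))

/-- Standard basis vectors of `ℝ³` (`e3v 0 = e₁`, `e3v 1 = e₂`, `e3v 2 = e₃`). -/
def e3v (i : Fin 3) : E3 := EuclideanSpace.single i 1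

/-- `(x,r)` belongs to the unit tangent bundle `UTS²`:
`x ∈ S²`, `r ∈ T_x S²` and `‖r‖₂ = 1`. -/
def UT (x r : E3) : Prop := x ∈ S2 ∧ ‖r‖ = 1 ∧ (inner ℝ x r : ℝ) = 0

/-- `R` is the rotation matrix `R(x,r)` corresponding to `(x,r) ∈ UTS²`,
i.e. `R ∈ SO(3)`, `R e₃ = x` and `R e₁ = r`. -/
def IsRotOf (R : Matrix (Fin 3) (Fin 3) ℝ) (x r : E3) : Prop :=
  SO3 R ∧ act R (e3v 2) = x ∧ act R (e3v 0) = r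

/-- Legendre polynomial via the Rodrigues formula. -/
def legendreP (n : ℕ) (x : ℝ) : ℝ :=
  (1 / (2 ^ n * n.factorial)) * iteratedDeriv n (fun y => (y ^ 2 - 1) ^ n) x

/-- Factorial of an integer (`0! ` for negative arguments, via `toNat`). -/
def intFact (m : ℤ) : ℕ := m.toNat.factorial

/-- Associated Legendre functions `P_n^k`, for `k : ℤ`. -/
def assocLegendre (n : ℕ) (k : ℤ) (x : ℝ) : ℝ :=
  if 0 ≤ k then
    Real.rpow (1 - x ^ 2) ((k : ℝ) / 2) * iteratedDeriv k.toNat (legendreP n) x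
  else
    (-1 : ℝ) ^ k.natAbs * ((intFact ((n : ℤ) + k) : ℝ) / (intFact ((n : ℤ) - k) : ℝ)) *
      (Real.rpow (1 - x ^ 2) ((k.natAbs : ℝ) / 2) * iteratedDeriv k.natAbs (legendreP n) x)

/-- Spherical harmonic `Y_n^k(θ,φ)`. -/
def sphHarm (n : ℕ) (k : ℤ) (θ φ : ℝ) : ℂ :=
  ((-1 : ℂ) ^ k) *
    (Real.sqrt ((2 * n + 1) / (4 * π) *
      ((intFact ((n : ℤ) - k) : ℝ) / (intFact ((n : ℤ) + k) : ℝ))) : ℂ) *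
    (assocLegendre n k (Real.cos θ) : ℂ) * Complex.exp (Complex.I * (k : ℂ) * (φ : ℂ))

/-- The factor `η` (depending on the parity of `K-1`). -/
def etaK (K : ℕ) : ℂ := if Even (K - 1) then 1 else Complex.I

/-- The factor `ν` (depending on the parity of `K+k`). -/
def nuK (K : ℕ) (k : ℤ) : ℝ := if Odd ((K : ℤ) + k) then 1 else 0

/-- The exponent `p = p(K,n)`. -/
def pK (K n : ℕ) : ℕ := if Even (K + n) then min (K - 1) (n - 1) else min (K - 1) n

/-- The directionality component `ζ_{n,k}^K`. -/
def zetaC (K n : ℕ) (k : ℤ) : ℂ :=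
  if k.natAbs < K then
    etaK K * (nuK K k : ℂ) *
      (Real.sqrt ((1 / 2 ^ pK K n) *
        (Nat.choose (pK K n) ((((pK K n : ℤ) - k) / 2).toNat) : ℝ)) : ℂ)
  else 0

/-- `ζ_k^K`, the common value of `ζ_{n,k}^K` for `n ≥ K` (independent of such `n`). -/
def zetaInf (K : ℕ) (k : ℤ) : ℂ := zetaC K (2 * K) k

/-- The directionality function `χ_K(γ) = conj(η) Σ_{k=1-K}^{K-1} ζ_k^K e^{ikγ}`. -/
def chiK (K : ℕ) (γ : ℝ) : ℂ :=
  (starRingEnd ℂ) (etaK K) *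
    ∑ k ∈ Finset.Icc (1 - (K : ℤ)) ((K : ℤ) - 1),
      zetaInf K k * Complex.exp (Complex.I * (k : ℂ) * (γ : ℂ))

/-- The directional wavelet `Ψ_K^N` in spherical coordinates. -/
def Psi (κ : ℝ → ℝ) (K N : ℕ) (θ φ : ℝ) : ℂ :=
  ∑' n : ℕ, ∑ k ∈ Finset.Icc (-(n : ℤ)) (n : ℤ),
    (Real.sqrt ((2 * n + 1) / (8 * π ^ 2)) : ℂ) * (κ ((n : ℝ) / (N : ℝ)) : ℂ) *
      zetaC K n k * sphHarm n k θ φ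

/-- Latitude `θ ∈ [0,π]` of a point on the sphere. -/
def sphTheta (y : E3) : ℝ := Real.arccos (y 2)

/-- Longitude `φ ∈ [0,2π)` of a point on the sphere. -/
def sphPhi (y : E3) : ℝ :=
  if Complex.arg ((y 0 : ℂ) + (y 1 : ℂ) * Complex.I) < 0 then
    Complex.arg ((y 0 : ℂ) + (y 1 : ℂ) * Complex.I) + 2 * π
  else Complex.arg ((y 0 : ℂ) + (y 1 : ℂ) * Complex.I)

/-- The directional wavelet `Ψ_K^N` as a function on `ℝ³ ⊇ S²`. -/
def PsiS (κ : ℝ → ℝ) (K N : ℕ) (y : E3) : ℂ := Psi κ K N (sphTheta y) (sphPhi y)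

/-- The surface measure `ω` on the unit sphere `S²`. -/
def ωS : Measure (Metric.sphere (0 : E3) 1) := MeasureTheory.volume.toSphere

/-- The window function has nonempty support contained in `[1/2, 2]`. -/
def WindowSupp (κ : ℝ → ℝ) : Prop :=
  Function.support κ ⊆ Icc (1 / 2) 2 ∧ (Function.support κ).Nonempty

/-- Frame coefficient `⟨f, D(x,r)Ψ_K^N⟩ = ∫_{S²} f(y) conj(Ψ_K^N(R(x,r)⁻¹y)) dω(y)`,
where `R` is the rotation corresponding to `(x,r)` (so `R⁻¹ = Rᵀ`). -/
def fcoef (κ : ℝ → ℝ) (K N : ℕ) (f : E3 → ℂ) (R : Matrix (Fin 3) (Fin 3) ℝ) : ℂ :=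
  ∫ y : Metric.sphere (0 : E3) 1,
    f (y : E3) * (starRingEnd ℂ) (PsiS κ K N (act R.transpose (y : E3))) ∂ωS

/-- Frame coefficient `⟨1_A, D(x,r)Ψ_K^N⟩`. -/
def wcoef (κ : ℝ → ℝ) (K N : ℕ) (A : Set E3) (R : Matrix (Fin 3) (Fin 3) ℝ) : ℂ :=
  fcoef κ K N (A.indicator fun _ => 1) R

/-- The infimum `φ* = inf_{t ∈ [a,b]} arcsin(‖v''(t)‖₂⁻¹)`. -/
def phiStar (v : ℝ → E3) (a b : ℝ) : ℝ :=
  sInf ((fun t => Real.arcsin (‖deriv (deriv v) t‖⁻¹)) '' Icc a b)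

/-- `sup_{t ∈ [a,b]} ‖v'''(t)‖₂`. -/
def supV3 (v : ℝ → E3) (a b : ℝ) : ℝ :=
  sSup ((fun t => ‖deriv (deriv (deriv v)) t‖) '' Icc a b)

/-- The geometric situation of Section 4: a region `A ⊆ S²` whose boundary `∂A` is the image
of a closed unit-speed curve `v` of length `L` (injective except `v 0 = v L`), positively
oriented, which is `C³` on `[a,b] ⊆ [0,L]`, together with the closeness assumptions (4.1)
and a fixed `δ ∈ (0,1]`. -/
structure EdgeSetup where
  A : Set E3
  L : ℝ
  v : ℝ → E3
  a : ℝ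
  b : ℝ
  δ : ℝ
  hA : A ⊆ S2
  hL : 0 < L
  hv_mem : ∀ t ∈ Icc (0 : ℝ) L, v t ∈ S2
  hv_smooth : ContDiffOn ℝ 1 v (Icc 0 L)
  hv_unit : ∀ t ∈ Icc (0 : ℝ) L, ‖deriv v t‖ = 1
  hv_closed : v 0 = v L
  hv_inj : ∀ s ∈ Icc (0 : ℝ) L, ∀ t ∈ Icc (0 : ℝ) L, v s = v t →
      s = t ∨ (s = 0 ∧ t = L) ∨ (s = L ∧ t = 0)
  hbd : sphFrontier A = v '' Icc 0 L
  ha : 0 ≤ a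
  hab : a < b
  hb : b ≤ L
  hC3 : ContDiffOn ℝ 3 v (Icc a b)
  horient : ∀ p ∈ Icc a b, ∀ᶠ ε in nhdsWithin (0 : ℝ) (Ioi 0),
      ‖v p + ε • rotAxis (v p) (π / 2) (deriv v p)‖⁻¹ •
        (v p + ε • rotAxis (v p) (π / 2) (deriv v p)) ∈ A
  hδpos : 0 < δ
  hδ1 : δ ≤ 1
  hclose1 : ∀ t₁ ∈ Icc a b, ∀ t₂ ∈ Icc a b,
      ‖v t₁ - v t₂‖ ≤ (1 - Real.cos (phiStar v a b)) / 2
  hclose2 : ∀ t₁ ∈ Icc a b, ∀ t₂ ∈ Icc a b,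
      ‖deriv v t₁ - deriv v t₂‖ ≤ 1 / 4 - (1 + Real.cos (phiStar v a b)) ^ 2 / 16

/-- The quantity `d_δ` of equation (4.2). -/
def dDelta (S : EdgeSetup) : ℝ :=
  min (S.δ / 5 * Real.sin (phiStar S.v S.a S.b / 2))
    (sInf {u : ℝ | ∃ t ∈ Icc (S.a + S.δ) (S.b - S.δ), ∃ s ∈ Icc 0 S.L \ Ioo S.a S.b,
        u = gd (S.v t) (S.v s)})

/-- The neighborhood `N(v([a,b]_δ))` of the curve segment `v([a,b]_δ)`: the points `x ∈ S²`
with `d(x,∂A) = d(x, v([a,b]_δ))` and `d(x,∂A) ≤ φ*/4`. -/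
def nbhd (S : EdgeSetup) : Set E3 :=
  {x | x ∈ S2 ∧
    gdSet x (sphFrontier S.A) = gdSet x (S.v '' Icc (S.a + S.δ) (S.b - S.δ)) ∧
    gdSet x (sphFrontier S.A) ≤ phiStar S.v S.a S.b / 4}

/-- `C(z,φc)` is the osculating spherical cap of `∂A` at `v(p)`: its boundary circle admits an
arc-length parameterization `u` on `[-π‖v''(p)‖⁻¹, π‖v''(p)‖⁻¹]` (so `∂C` has length
`2π‖v''(p)‖⁻¹`) which agrees with `v` at `p` up to second order, and `u` is positively
oriented with respect to `A`. -/
def IsOscCap (A : Set E3) (v : ℝ → E3) (p : ℝ) (z : E3) (φc : ℝ) : Prop :=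
  z ∈ S2 ∧ φc ∈ Ioo 0 π ∧
  ∃ u : ℝ → E3,
    ContDiff ℝ 2 u ∧
    (∀ t ∈ Icc (-(π * ‖deriv (deriv v) p‖⁻¹)) (π * ‖deriv (deriv v) p‖⁻¹),
      ‖deriv u t‖ = 1) ∧
    u '' Icc (-(π * ‖deriv (deriv v) p‖⁻¹)) (π * ‖deriv (deriv v) p‖⁻¹) = capBd z φc ∧
    Set.InjOn u (Ico (-(π * ‖deriv (deriv v) p‖⁻¹)) (π * ‖deriv (deriv v) p‖⁻¹)) ∧
    u 0 = v p ∧ deriv u 0 = deriv v p ∧ deriv (deriv u) 0 = deriv (deriv v) p ∧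
    ∀ ε > 0, ∃ w ∈ A ∩ cap z φc, (inner ℝ w (deriv v p) : ℝ) = 0 ∧ gd w (v p) < ε

end
/-- The point `x(θ,φ)` on the unit sphere with latitude `θ` and longitude `φ`. -/
noncomputable def spt (θ φ : ℝ) : E3 :=
  (EuclideanSpace.equiv (Fin 3) ℝ).symm
    ![Real.sin θ * Real.cos φ, Real.sin θ * Real.sin φ, Real.cos θ]

lemma sin_ge_sub_cube' (t : ℝ) (ht : 0 ≤ t) : t - t ^ 3 / 6 ≤ Real.sin t := by
  have key : ∀ x : ℝ, HasDerivAt (fun y => Real.sin y - y + y ^ 3 / 6)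
      (Real.cos x - 1 + x ^ 2 / 2) x := by
    intro x
    have h1 := (Real.hasDerivAt_sin x).sub (hasDerivAt_id x)
    have h2 := (hasDerivAt_pow 3 x).div_const 6
    have := h1.add h2
    exact this.congr_deriv (by push_cast; ring)
  have hmono : Monotone (fun y => Real.sin y - y + y ^ 3 / 6) :=
    monotone_of_deriv_nonneg (fun x => (key x).differentiableAt)
      (fun x => by
        rw [(key x).deriv]
        nlinarith [Real.one_sub_sq_div_two_le_cos (x := x)])
  have := hmono ht
  simp only [Real.sin_zero] at this
  linarith [this]

lemma cos_le_quartic' (x : ℝ) (hx : 0 ≤ x) : Real.cos x ≤ 1 - x ^ 2 / 2 + x ^ 4 / 24 := by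
  have key : ∀ y : ℝ, HasDerivAt (fun z => 1 - z ^ 2 / 2 + z ^ 4 / 24 - Real.cos z)
      (-y + y ^ 3 / 6 + Real.sin y) y := by
    intro y
    have h1 : HasDerivAt (fun z : ℝ => 1 - z ^ 2 / 2) (-y) y := by
      have := ((hasDerivAt_pow 2 y).div_const 2).const_sub 1
      exact this.congr_deriv (by push_cast; ring)
    have h2 := (hasDerivAt_pow 4 y).div_const 24
    have h3 := Real.hasDerivAt_cos y
    have := (h1.add h2).sub h3
    exact this.congr_deriv (by push_cast; ring)
  have hmono : MonotoneOn (fun z => 1 - z ^ 2 / 2 + z ^ 4 / 24 - Real.cos z) (Ici 0) := by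
    apply monotoneOn_of_deriv_nonneg (convex_Ici 0)
      (Continuous.continuousOn (by continuity))
      (fun y _ => ((key y).differentiableAt).differentiableWithinAt)
    intro y hy
    rw [interior_Ici] at hy
    rw [(key y).deriv]
    have := sin_ge_sub_cube' y (le_of_lt hy)
    linarith
  have := hmono (self_mem_Ici) (mem_Ici.2 hx) hx
  simp only [Real.cos_zero] at this
  norm_num at this
  linarith

/-- Lemma 4.4, first part: distance between two points of equal latitude. -/
theorem equal_latitude_distance
    (ϕ : ℝ) (hϕ : ϕ ∈ Icc (-π) π) (φ : ℝ) (hφ : φ ∈ Icc (0 : ℝ) π) :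
    gd (spt φ 0) (spt φ ϕ) = Real.arccos (1 + (Real.cos ϕ - 1) * Real.sin φ ^ 2) ∧
    Real.sqrt (1 - ϕ ^ 2 / 12) * |ϕ| * Real.sin φ ≤ gd (spt φ 0) (spt φ ϕ) := by
  have hinner : (inner ℝ (spt φ 0) (spt φ ϕ) : ℝ) = 1 + (Real.cos ϕ - 1) * Real.sin φ ^ 2 := by
    simp [spt, PiLp.inner_apply, Fin.sum_univ_three, RCLike.inner_apply]
    nlinarith [Real.sin_sq_add_cos_sq φ]
  have heq : gd (spt φ 0) (spt φ ϕ) =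
      Real.arccos (1 + (Real.cos ϕ - 1) * Real.sin φ ^ 2) := by
    unfold gd; rw [hinner]
  refine ⟨heq, ?_⟩
  rw [heq]
  set u : ℝ := (1 - Real.cos ϕ) * Real.sin φ ^ 2 with hu
  have hrw : 1 + (Real.cos ϕ - 1) * Real.sin φ ^ 2 = 1 - u := by rw [hu]; ring
  rw [hrw]
  have hsin : 0 ≤ Real.sin φ := Real.sin_nonneg_of_nonneg_of_le_pi hφ.1 hφ.2
  have hcos1 : Real.cos ϕ ≤ 1 := Real.cos_le_one ϕ
  have hcosm1 : -1 ≤ Real.cos ϕ := Real.neg_one_le_cos ϕ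
  have hsinle : Real.sin φ ^ 2 ≤ 1 := Real.sin_sq_le_one φ
  have hu0 : 0 ≤ u := by nlinarith [sq_nonneg (Real.sin φ)]
  have hu2 : u ≤ 2 := by nlinarith [sq_nonneg (Real.sin φ)]
  have h2u : (0:ℝ) ≤ 2 * u := by linarith
  have hsq : Real.sqrt (2 * u) ^ 2 = 2 * u := Real.sq_sqrt h2u
  have hsnn : 0 ≤ Real.sqrt (2 * u) := Real.sqrt_nonneg _
  have hπ3 : (3:ℝ) < π := Real.pi_gt_three
  have hsπ : Real.sqrt (2 * u) ≤ π := by nlinarith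
  have hcos : 1 - u ≤ Real.cos (Real.sqrt (2 * u)) := by
    have := Real.one_sub_sq_div_two_le_cos (x := Real.sqrt (2 * u))
    rw [hsq] at this; linarith
  have h1 : Real.sqrt (2 * u) ≤ Real.arccos (1 - u) := by
    have harc : Real.arccos (Real.cos (Real.sqrt (2 * u))) = Real.sqrt (2 * u) :=
      Real.arccos_cos hsnn hsπ
    have hanti : Real.arccos (Real.cos (Real.sqrt (2 * u))) ≤ Real.arccos (1 - u) := by
      unfold Real.arccos
      have := Real.monotone_arcsin hcos
      linarith
    linarith
  have hϕ2 : ϕ ^ 2 ≤ π ^ 2 := by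
    rcases hϕ with ⟨h1', h2'⟩; nlinarith [Real.pi_pos]
  have hπ315 : π < 3.15 := Real.pi_lt_d2
  have h12 : 0 ≤ 1 - ϕ ^ 2 / 12 := by nlinarith
  have hquart : (1 - ϕ ^ 2 / 12) * ϕ ^ 2 ≤ 2 * (1 - Real.cos ϕ) := by
    have h := cos_le_quartic' |ϕ| (abs_nonneg ϕ)
    rw [Real.cos_abs] at h
    have habs2 : |ϕ| ^ 2 = ϕ ^ 2 := sq_abs ϕ
    have habs4 : |ϕ| ^ 4 = ϕ ^ 4 := by
      rw [show (4:ℕ) = 2 * 2 from rfl, pow_mul, pow_mul, habs2]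
    rw [habs2, habs4] at h
    nlinarith
  have h2 : Real.sqrt (1 - ϕ ^ 2 / 12) * |ϕ| * Real.sin φ ≤ Real.sqrt (2 * u) := by
    have hxnn : 0 ≤ Real.sqrt (1 - ϕ ^ 2 / 12) * |ϕ| * Real.sin φ := by positivity
    rw [Real.le_sqrt hxnn h2u]
    have hpow : (Real.sqrt (1 - ϕ ^ 2 / 12) * |ϕ| * Real.sin φ) ^ 2 =
        (1 - ϕ ^ 2 / 12) * ϕ ^ 2 * Real.sin φ ^ 2 := by
      rw [mul_pow, mul_pow, Real.sq_sqrt h12, sq_abs]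
    rw [hpow, hu]
    nlinarith [sq_nonneg (Real.sin φ)]
  linarith
end

section
/- Let φ ∈ (0,π). Then the function ϕ ↦ d(x(φ,0), x(φ,ϕ)) is even on [−π,π] and strictly increasing on [0,π], and for every ϕ ∈ [−π,π] one has |ϕ| ≤ 5 d(x(φ,0), x(φ,ϕ)) / (2 sinφ). -/
open MeasureTheory Real Set Filter
open scoped BigOperators Classical

lemma gd_spt0 (φ ϕ : ℝ) : gd (spt φ 0) (spt φ ϕ) = Real.arccos (1 - sin φ ^ 2 * (1 - cos ϕ)) := by
  have : (inner ℝ (spt φ 0) (spt φ ϕ) : ℝ) = 1 - sin φ ^ 2 * (1 - cos ϕ) := by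
    simp [spt, PiLp.inner_apply, Fin.sum_univ_three]
    nlinarith [sin_sq_add_cos_sq φ]
  rw [gd, this]

lemma arccos_eq (a : ℝ) (ha : 0 ≤ a) (ha1 : a ≤ 1) :
    Real.arccos (1 - 2 * a ^ 2) = 2 * Real.arcsin a := by
  have h1 : 0 ≤ Real.arcsin a := Real.arcsin_nonneg.2 ha
  have h2 : Real.arcsin a ≤ π / 2 := Real.arcsin_le_pi_div_two a
  have : Real.cos (2 * Real.arcsin a) = 1 - 2 * a ^ 2 := by
    rw [Real.cos_two_mul']
    have hsa : Real.sin (Real.arcsin a) = a := Real.sin_arcsin (by linarith) ha1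
    nlinarith [Real.sin_sq_add_cos_sq (Real.arcsin a)]
  rw [← this, Real.arccos_cos (by linarith) (by linarith)]


/-- Lemma 4.4, second part: for `φ ∈ (0,π)`, the distance between two
points of equal latitude `φ` is an even, on `[0,π]` strictly increasing, function of the
longitude difference and dominates `|ϕ| 2 sin(φ) / 5`. -/
theorem equal_latitude_distance_monotone (φ : ℝ) (hφ : φ ∈ Ioo 0 π) :
    (∀ ϕ ∈ Icc (-π) π, gd (spt φ 0) (spt φ (-ϕ)) = gd (spt φ 0) (spt φ ϕ)) ∧
    StrictMonoOn (fun ϕ => gd (spt φ 0) (spt φ ϕ)) (Icc 0 π) ∧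
    ∀ ϕ ∈ Icc (-π) π, |ϕ| ≤ 5 * gd (spt φ 0) (spt φ ϕ) / (2 * Real.sin φ) := by
  have hs : 0 < sin φ := Real.sin_pos_of_pos_of_lt_pi hφ.1 hφ.2
  have hs1 : sin φ ≤ 1 := Real.sin_le_one φ
  refine ⟨fun ϕ _ => by rw [gd_spt0, gd_spt0, Real.cos_neg], ?_, ?_⟩
  · intro x hx y hy hxy
    simp only [gd_spt0]
    apply Real.strictAntiOn_arccos
    · constructor <;> nlinarith [Real.cos_le_one y, Real.neg_one_le_cos y]
    · constructor <;> nlinarith [Real.cos_le_one x, Real.neg_one_le_cos x]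
    · have h := Real.strictAntiOn_cos hx hy hxy
      nlinarith [mul_pos (mul_pos hs hs) (sub_pos.2 h)]
  · intro ϕ hϕ
    -- reduce to |ϕ|
    have hcos : cos |ϕ| = cos ϕ := by
      rcases abs_cases ϕ with ⟨h, _⟩ | ⟨h, _⟩
      · rw [h]
      · rw [h, Real.cos_neg]
    rw [gd_spt0, ← hcos]
    set t := |ϕ| with ht
    have ht0 : 0 ≤ t := abs_nonneg ϕ
    have htπ : t ≤ π := abs_le.2 hϕ
    -- key: 1 - sin²φ(1-cos t) = 1 - 2 (sinφ sin(t/2))²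
    have hkey : 1 - sin φ ^ 2 * (1 - cos t) = 1 - 2 * (sin φ * sin (t / 2)) ^ 2 := by
      have h := Real.cos_two_mul (t/2)
      have h' := Real.sin_sq_add_cos_sq (t/2)
      have he : (2:ℝ) * (t/2) = t := by ring
      rw [he] at h
      nlinarith
    have hst : 0 ≤ sin (t / 2) := Real.sin_nonneg_of_nonneg_of_le_pi (by linarith) (by linarith)
    have hst1 : sin (t / 2) ≤ 1 := Real.sin_le_one _
    have ha0 : 0 ≤ sin φ * sin (t / 2) := by positivity
    have ha1 : sin φ * sin (t / 2) ≤ 1 := by nlinarith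
    rw [hkey, arccos_eq _ ha0 ha1]
    -- arcsin a ≥ a
    have harc : sin φ * sin (t / 2) ≤ Real.arcsin (sin φ * sin (t / 2)) := by
      have := Real.sin_le (Real.arcsin_nonneg.2 ha0)
      rw [Real.sin_arcsin (by linarith) ha1] at this
      linarith
    -- sin(t/2) ≥ t/π ≥ t/5
    have hsin : t / π ≤ sin (t / 2) := by
      have := Real.mul_le_sin (x := t / 2) (by linarith) (by linarith)
      have hπ : (0:ℝ) < π := Real.pi_pos
      rw [div_le_iff₀ hπ]
      calc t = 2 / π * (t / 2) * π := by field_simp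
        _ ≤ sin (t / 2) * π := by nlinarith
    have h5 : t / 5 ≤ sin (t / 2) := by
      have hπ5 : π ≤ 5 := by linarith [Real.pi_le_four]
      have : t / 5 ≤ t / π := by
        apply div_le_div_of_nonneg_left ht0 Real.pi_pos hπ5
      linarith
    rw [le_div_iff₀ (by positivity)]
    nlinarith [mul_le_mul_of_nonneg_left h5 hs.le]
end

section
/- Let Ψ_K^N be the directional wavelet with a bounded window κ supported in [1/2,2]. Then there exists a constant c = c(κ,K) > 0 such that ‖Ψ_K^N‖_∞ = sup_{x∈S²} |Ψ_K^N(x)| ≤ c N² for all N ∈ ℕ. -/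
open MeasureTheory Real Set Filter
open scoped BigOperators Classical

namespace WaveletAux
open Polynomial Complex intervalIntegral
noncomputable section

lemma iteratedDeriv_polyeval (p : Polynomial ℝ) (r : ℕ) :
    iteratedDeriv r (fun y : ℝ => p.eval y) = fun y => (derivative^[r] p).eval y := by
  induction r generalizing p with
  | zero => simp [iteratedDeriv_zero]
  | succ r ih =>
    rw [iteratedDeriv_succ']
    have : (deriv fun y : ℝ => p.eval y) = fun y => p.derivative.eval y := by
      funext y; exact Polynomial.deriv p
    rw [this, ih, Function.iterate_succ_apply]

lemma fact_eq_fact_mul_prod (a m : ℕ) :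
    (a + m).factorial = a.factorial * ∏ j ∈ Finset.range m, (a + j + 1) := by
  induction m with
  | zero => simp
  | succ m ih =>
    rw [Finset.prod_range_succ, ← mul_assoc, ← ih]
    rw [← Nat.add_assoc, Nat.factorial_succ, mul_comm]

lemma fact_ineq (n m : ℕ) (h : m ≤ n) :
    (n + m).factorial * (n - m).factorial ≤ (m+1)^m * (n.factorial * n.factorial) := by
  obtain ⟨l, rfl⟩ : ∃ l, n = l + m := ⟨n - m, by omega⟩
  have h1 := fact_eq_fact_mul_prod (l + m) m
  have h2 := fact_eq_fact_mul_prod l m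
  rw [h1]
  have h3 : (l + m) - m = l := by omega
  rw [h3]
  have hprod : (∏ j ∈ Finset.range m, (l + m + j + 1)) ≤ (m+1)^m * ∏ j ∈ Finset.range m, (l + j + 1) := by
    calc (∏ j ∈ Finset.range m, (l + m + j + 1))
        ≤ ∏ j ∈ Finset.range m, ((m+1) * (l + j + 1)) := by
          apply Finset.prod_le_prod' ; intro i _; nlinarith
      _ = (m+1)^m * ∏ j ∈ Finset.range m, (l + j + 1) := by
          rw [Finset.prod_mul_distrib, Finset.prod_const, Finset.card_range]
  calc (l + m).factorial * (∏ j ∈ Finset.range m, (l + m + j + 1)) * l.factorial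
      ≤ (l + m).factorial * ((m+1)^m * ∏ j ∈ Finset.range m, (l + j + 1)) * l.factorial := by
        exact Nat.mul_le_mul_right _ (Nat.mul_le_mul_left _ hprod)
    _ = (m+1)^m * ((l+m).factorial * ((l.factorial * ∏ j ∈ Finset.range m, (l + j + 1)))) := by ring
    _ = (m+1)^m * ((l+m).factorial * (l+m).factorial) := by rw [← h2]

-- orthogonality
lemma ortho (d : ℤ) :
    (∫ φ : ℝ in (0:ℝ)..(2*Real.pi), Complex.exp (Complex.I * d * φ)) =
      if d = 0 then (2*Real.pi : ℂ) else 0 := by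
  by_cases hd : d = 0
  · simp [hd]
  · rw [if_neg hd]
    have hc : (Complex.I * d) ≠ 0 := by
      simp [Complex.I_ne_zero, hd]
    have := integral_exp_mul_complex (a := 0) (b := 2*Real.pi) hc
    have heq : (fun x : ℝ => Complex.exp (Complex.I * d * x)) = fun x : ℝ => Complex.exp (Complex.I * d * x) := rfl
    rw [show (fun x : ℝ => Complex.exp (Complex.I * ↑d * ↑x)) = (fun x : ℝ => Complex.exp ((Complex.I * ↑d) * ↑x)) by ring_nf] at *
    rw [this]
    have h1 : Complex.exp (Complex.I * ↑d * ↑(2*Real.pi)) = 1 := by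
      push_cast
      rw [show Complex.I * ↑d * (2 * ↑Real.pi) = (d : ℂ) * (2 * ↑Real.pi * Complex.I) by ring]
      exact Complex.exp_int_mul_two_pi_mul_I d
    rw [h1]
    simp

-- star identity
lemma star_id (n : ℕ) (c s : ℝ) (h1 : c^2 + s^2 = 1) (φ : ℝ) :
    (((c:ℂ) + Complex.I*s*Complex.exp (Complex.I*φ))^2 - 1)^n
      = (2*Complex.I*s*Complex.exp (Complex.I*φ))^n * ((c:ℂ) + Complex.I*s*(Real.cos φ : ℂ))^n := by
  rw [← mul_pow]
  congr 1
  have hcos : (Real.cos φ : ℂ) = (Complex.exp (Complex.I*φ) + Complex.exp (-(Complex.I*φ)))/2 := by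
    rw [Complex.ofReal_cos]
    rw [Complex.cos]
    ring_nf
  have he : Complex.exp (Complex.I*φ) * Complex.exp (-(Complex.I*φ)) = 1 := by
    rw [← Complex.exp_add]; simp
  rw [hcos]
  set e := Complex.exp (Complex.I*φ)
  set e' := Complex.exp (-(Complex.I*φ))
  have hcs : (c:ℂ)^2 + (s:ℂ)^2 = 1 := by
    have := congrArg (Complex.ofReal) h1
    push_cast at this; linear_combination this
  linear_combination (-(Complex.I^2 * (s:ℂ)^2)) * he + (-((s:ℂ)^2)) * Complex.I_sq + hcs

lemma taylor_expand (n : ℕ) (c w : ℂ) :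
    (((X : Polynomial ℂ)^2 - 1)^n).eval (c + w)
      = ∑ j ∈ Finset.range (2*n+1),
          ((hasseDeriv j (((X : Polynomial ℂ)^2-1)^n)).eval c) * w^j := by
  set q : Polynomial ℂ := ((X : Polynomial ℂ)^2 - 1)^n with hq
  have hdeg : q.natDegree < 2*n+1 := by
    have h2 : ((X : Polynomial ℂ)^2 - 1).natDegree ≤ 2 := by
      apply le_trans (Polynomial.natDegree_sub_le _ _)
      simp [Polynomial.natDegree_X_pow]
    have := Polynomial.natDegree_pow_le (p := ((X : Polynomial ℂ)^2 - 1)) (n := n)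
    have : q.natDegree ≤ n * 2 := le_trans this (by nlinarith)
    omega
  have h1 : q.eval (c + w) = (Polynomial.taylor c q).eval w := by
    rw [Polynomial.taylor_eval]; ring_nf
  rw [h1]
  have hdeg' : (Polynomial.taylor c q).natDegree < 2*n+1 := by
    rwa [Polynomial.natDegree_taylor]
  rw [Polynomial.eval_eq_sum_range' hdeg']
  exact Finset.sum_congr rfl fun j _ => by rw [Polynomial.taylor_coeff]

lemma core (n m : ℕ) (hm : m ≤ n) {c s : ℝ} (h1 : c^2+s^2=1) (hs : 0 < s) :
    |(Polynomial.derivative^[n+m] (((X : Polynomial ℝ)^2 - 1)^n)).eval c| * s^m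
      ≤ 2^n * (n+m).factorial := by
  set qR : Polynomial ℝ := ((X : Polynomial ℝ)^2 - 1)^n with hqR
  set qC : Polynomial ℂ := ((X : Polynomial ℂ)^2 - 1)^n with hqC
  have hmap : qC = qR.map (algebraMap ℝ ℂ) := by
    simp [hqR, hqC, Polynomial.map_pow, Polynomial.map_sub, Polynomial.map_one, Polynomial.map_X]
  have heval : ∀ j, (Polynomial.derivative^[j] qC).eval (c:ℂ)
      = (((Polynomial.derivative^[j] qR).eval c : ℝ) : ℂ) := by
    intro j
    rw [hmap, show (Polynomial.derivative^[j] (qR.map (algebraMap ℝ ℂ))) = ((Polynomial.derivative^[j] qR).map (algebraMap ℝ ℂ)) from (Polynomial.iterate_derivative_map qR (algebraMap ℝ ℂ) j)]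
    have : ((c : ℂ)) = algebraMap ℝ ℂ c := rfl
    rw [this, Polynomial.eval_map, Polynomial.eval₂_at_apply]
    rfl
  -- the A coefficient
  set A : ℂ := (hasseDeriv (n+m) qC).eval c with hA
  have hAder : (Polynomial.derivative^[n+m] qC).eval (c:ℂ) = ((n+m).factorial : ℂ) * A := by
    rw [← Polynomial.factorial_smul_hasseDeriv]
    simp [hA, nsmul_eq_mul]
  set dd : ℤ := -(((n:ℤ)) + m) with hdd
  set J : ℂ := ∫ φ in (0:ℝ)..(2*Real.pi),
      qC.eval ((c:ℂ) + Complex.I*s*Complex.exp (Complex.I*φ)) *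
        Complex.exp (Complex.I*(dd:ℂ)*φ) with hJ
  -- side (a)
  have hmerge : ∀ (j : ℕ) (φ : ℝ), Complex.exp (Complex.I*φ)^j * Complex.exp (Complex.I*(dd:ℂ)*φ)
      = Complex.exp (Complex.I*((((j:ℤ)+dd : ℤ)):ℂ)*φ) := by
    intro j φ
    rw [← Complex.exp_nat_mul, ← Complex.exp_add]
    congr 1
    push_cast
    ring
  have ha : J = A * (Complex.I*s)^(n+m) * (2*Real.pi) := by
    have hptw : ∀ φ : ℝ, qC.eval ((c:ℂ) + Complex.I*s*Complex.exp (Complex.I*φ)) *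
        Complex.exp (Complex.I*(dd:ℂ)*φ)
        = ∑ j ∈ Finset.range (2*n+1),
            (hasseDeriv j qC).eval (c:ℂ) * (Complex.I*(s:ℂ))^j *
              Complex.exp (Complex.I*((((j:ℤ)+dd : ℤ)):ℂ)*φ) := by
      intro φ
      rw [hqC, taylor_expand n (c:ℂ) (Complex.I*s*Complex.exp (Complex.I*φ)), Finset.sum_mul]
      refine Finset.sum_congr rfl fun j _ => ?_
      rw [← hmerge j φ, mul_pow]
      ring
    have hJ' : J = ∑ j ∈ Finset.range (2*n+1),
        (hasseDeriv j qC).eval (c:ℂ) * (Complex.I*(s:ℂ))^j *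
          (∫ φ in (0:ℝ)..(2*Real.pi), Complex.exp (Complex.I*((((j:ℤ)+dd : ℤ)):ℂ)*φ)) := by
      rw [hJ]
      rw [intervalIntegral.integral_congr (g := fun φ : ℝ => ∑ j ∈ Finset.range (2*n+1),
            (hasseDeriv j qC).eval (c:ℂ) * (Complex.I*(s:ℂ))^j *
              Complex.exp (Complex.I*((((j:ℤ)+dd : ℤ)):ℂ)*φ)) (fun φ _ => hptw φ)]
      rw [intervalIntegral.integral_finset_sum]
      · exact Finset.sum_congr rfl fun j _ => by
          rw [intervalIntegral.integral_const_mul]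
      · intro j _
        apply Continuous.intervalIntegrable
        fun_prop
    rw [hJ']
    rw [Finset.sum_eq_single (n+m)]
    · rw [ortho ((((n+m):ℕ):ℤ) + dd)]
      have : (((n+m):ℕ):ℤ) + dd = 0 := by push_cast [hdd]; ring
      rw [if_pos this]
    · intro j _ hj
      rw [ortho ((j:ℤ) + dd)]
      have : ¬ ((j:ℤ) + dd = 0) := by
        simp only [hdd]
        omega
      rw [if_neg this, mul_zero]
    · intro hmem
      exfalso
      apply hmem
      simp only [Finset.mem_range]
      omega
  -- side (b)
  set J2 : ℂ := ∫ φ in (0:ℝ)..(2*Real.pi),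
      ((c:ℂ) + Complex.I*s*(Real.cos φ : ℂ))^n * Complex.exp (Complex.I*((-(m:ℤ) : ℤ):ℂ)*φ) with hJ2
  have hb : J = (2*Complex.I*(s:ℂ))^n * J2 := by
    rw [hJ, hJ2, ← intervalIntegral.integral_const_mul]
    apply intervalIntegral.integral_congr
    intro φ _
    dsimp only
    have hev : qC.eval ((c:ℂ) + Complex.I*s*Complex.exp (Complex.I*φ))
        = (((c:ℂ) + Complex.I*s*Complex.exp (Complex.I*φ))^2 - 1)^n := by
      simp [hqC]
    rw [hev, star_id n c s h1 φ, mul_pow (2*Complex.I*(s:ℂ))]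
    have hm2 : Complex.exp (Complex.I*φ)^n * Complex.exp (Complex.I*(dd:ℂ)*φ)
        = Complex.exp (Complex.I*((-(m:ℤ) : ℤ):ℂ)*φ) := by
      rw [hmerge n φ]
      congr 2
      push_cast [hdd]
      ring
    calc (2*Complex.I*(s:ℂ))^n * Complex.exp (Complex.I*φ)^n *
          ((c:ℂ) + Complex.I*s*(Real.cos φ : ℂ))^n * Complex.exp (Complex.I*(dd:ℂ)*φ)
        = (2*Complex.I*(s:ℂ))^n * (((c:ℂ) + Complex.I*s*(Real.cos φ : ℂ))^n *
            (Complex.exp (Complex.I*φ)^n * Complex.exp (Complex.I*(dd:ℂ)*φ))) := by ring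
      _ = _ := by rw [hm2]
  have hnormexp : ∀ (d : ℤ) (φ : ℝ), ‖Complex.exp (Complex.I*((d : ℤ):ℂ)*φ)‖ = 1 := by
    intro d φ
    rw [Complex.norm_exp]
    have : (Complex.I*((d : ℤ):ℂ)*(φ:ℝ)).re = 0 := by
      simp [Complex.mul_re]
    rw [this, Real.exp_zero]
  have hJ2bd : ‖J2‖ ≤ 2*Real.pi := by
    have := intervalIntegral.norm_integral_le_of_norm_le_const (a := (0:ℝ)) (b := 2*Real.pi)
      (C := 1) (f := fun φ : ℝ => ((c:ℂ) + Complex.I*s*(Real.cos φ : ℂ))^n *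
        Complex.exp (Complex.I*((-(m:ℤ) : ℤ):ℂ)*φ)) ?_
    · rw [hJ2]
      refine le_trans this ?_
      rw [one_mul]
      rw [sub_zero, _root_.abs_of_nonneg Real.two_pi_pos.le]
    · intro φ _
      rw [norm_mul, hnormexp, mul_one, norm_pow]
      apply pow_le_one₀ (norm_nonneg _)
      have hrw : (c:ℂ) + Complex.I*s*(Real.cos φ : ℂ) = ((c:ℝ):ℂ) + ((s * Real.cos φ : ℝ):ℂ)*Complex.I := by
        push_cast; ring
      rw [hrw, Complex.norm_add_mul_I]
      rw [show (1:ℝ) = Real.sqrt 1 from (Real.sqrt_one).symm]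
      apply Real.sqrt_le_sqrt
      nlinarith [Real.cos_sq_le_one φ, sq_nonneg s]
  -- combine
  have hnormJa : ‖J‖ = ‖A‖ * s^(n+m) * (2*Real.pi) := by
    rw [ha, norm_mul, norm_mul, norm_pow, norm_mul, Complex.norm_I, one_mul,
      Complex.norm_real, Real.norm_eq_abs, _root_.abs_of_pos hs]
    rw [show ((2:ℂ) * (Real.pi:ℂ)) = ((2*Real.pi : ℝ):ℂ) by push_cast; ring,
      Complex.norm_real, Real.norm_eq_abs, _root_.abs_of_pos Real.two_pi_pos]
  have hnormJb : ‖J‖ ≤ (2*s)^n * (2*Real.pi) := by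
    rw [hb, norm_mul]
    have h2s : ‖(2*Complex.I*(s:ℂ))^n‖ = (2*s)^n := by
      rw [norm_pow]
      congr 1
      rw [norm_mul, norm_mul, Complex.norm_I, mul_one, Complex.norm_real, Real.norm_eq_abs,
        _root_.abs_of_pos hs]
      norm_num
    rw [h2s]
    exact mul_le_mul_of_nonneg_left hJ2bd (by positivity)
  have hA_bound : ‖A‖ * s^m ≤ 2^n := by
    have h0 : ‖A‖ * s^(n+m) * (2*Real.pi) ≤ (2*s)^n * (2*Real.pi) := by
      rw [← hnormJa]; exact hnormJb
    have h2 : ‖A‖ * s^(n+m) ≤ (2*s)^n :=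
      le_of_mul_le_mul_right h0 Real.two_pi_pos
    rw [pow_add, mul_pow] at h2
    have hsn : (0:ℝ) < s^n := pow_pos hs n
    have h3 : (‖A‖ * s^m) * s^n ≤ 2^n * s^n := by nlinarith
    exact le_of_mul_le_mul_right h3 hsn
  have habs : |(Polynomial.derivative^[n+m] qR).eval c| = ((n+m).factorial : ℝ) * ‖A‖ := by
    have h4 : (((Polynomial.derivative^[n+m] qR).eval c : ℝ) : ℂ) = ((n+m).factorial : ℂ) * A := by
      rw [← heval, hAder]
    have h5 := congrArg norm h4
    rw [Complex.norm_real, Real.norm_eq_abs, norm_mul] at h5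
    rw [h5]
    congr 1
    rw [Complex.norm_natCast]
  rw [habs]
  calc ((n+m).factorial : ℝ) * ‖A‖ * s^m = ((n+m).factorial : ℝ) * (‖A‖ * s^m) := by ring
    _ ≤ ((n+m).factorial : ℝ) * 2^n := by
        exact mul_le_mul_of_nonneg_left hA_bound (by positivity)
    _ = 2^n * (n+m).factorial := by ring

lemma KB (n m : ℕ) (hm : m ≤ n) {x : ℝ} (hx : x ∈ Set.Icc (-1:ℝ) 1) :
    (Real.sqrt (1 - x^2))^m * |(Polynomial.derivative^[n+m] (((X : Polynomial ℝ)^2 - 1)^n)).eval x|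
      ≤ 2^n * (n+m).factorial := by
  set g : ℝ → ℝ := fun x => (Real.sqrt (1 - x^2))^m *
    |(Polynomial.derivative^[n+m] (((X : Polynomial ℝ)^2 - 1)^n)).eval x| with hg
  have hcont : Continuous g := by
    apply Continuous.mul
    · exact (Real.continuous_sqrt.comp (by continuity)).pow m
    · exact ((Polynomial.derivative^[n+m] (((X : Polynomial ℝ)^2 - 1)^n)).continuous).abs
  have hclosed : IsClosed {y : ℝ | g y ≤ 2^n * (n+m).factorial} :=
    isClosed_le hcont continuous_const
  have hIoo : Set.Ioo (-1:ℝ) 1 ⊆ {y : ℝ | g y ≤ 2^n * (n+m).factorial} := by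
    intro y hy
    have h1 : 0 < 1 - y^2 := by nlinarith [hy.1, hy.2]
    have hs : 0 < Real.sqrt (1 - y^2) := Real.sqrt_pos.mpr h1
    have hcs : y^2 + (Real.sqrt (1 - y^2))^2 = 1 := by
      rw [Real.sq_sqrt h1.le]; ring
    have := core n m hm hcs hs
    simp only [Set.mem_setOf_eq, hg]
    linarith [this]
  have hsub : Set.Icc (-1:ℝ) 1 ⊆ {y : ℝ | g y ≤ 2^n * (n+m).factorial} := by
    rw [← closure_Ioo (by norm_num : (-1:ℝ) ≠ 1)]
    exact hclosed.closure_subset_iff.mpr hIoo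
  exact hsub hx


lemma legendre_iteratedDeriv (n m : ℕ) (x : ℝ) :
    iteratedDeriv m (legendreP n) x
      = (1 / (2^n * (n.factorial:ℝ))) *
        (Polynomial.derivative^[n+m] (((X : Polynomial ℝ)^2 - 1)^n)).eval x := by
  have h0 : legendreP n = fun y : ℝ =>
      ((Polynomial.C (1/(2^n * (n.factorial:ℝ)))) *
        Polynomial.derivative^[n] (((X : Polynomial ℝ)^2 - 1)^n)).eval y := by
    funext y
    rw [legendreP]
    have hfun : (fun z : ℝ => (z^2-1)^n) = fun z => ((((X : Polynomial ℝ)^2-1)^n)).eval z := by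
      funext z; simp
    rw [hfun, iteratedDeriv_polyeval]
    simp
  rw [h0, iteratedDeriv_polyeval, Polynomial.iterate_derivative_C_mul]
  dsimp only
  rw [Polynomial.eval_mul, Polynomial.eval_C, ← Function.iterate_add_apply, Nat.add_comm m n]

lemma sinpow_bound (n m : ℕ) (hm : m ≤ n) {θ : ℝ} (h0 : 0 ≤ θ) (hπ : θ ≤ Real.pi) :
    Real.rpow (1 - (Real.cos θ)^2) ((m:ℝ)/2) * |iteratedDeriv m (legendreP n) (Real.cos θ)|
      ≤ ((n+m).factorial : ℝ) / (n.factorial : ℝ) := by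
  have hc1 : (0:ℝ) ≤ 1 - (Real.cos θ)^2 := by nlinarith [Real.cos_sq_le_one θ]
  have hrpow : Real.rpow (1 - (Real.cos θ)^2) ((m:ℝ)/2)
      = (Real.sqrt (1 - (Real.cos θ)^2))^m := by
    rw [Real.sqrt_eq_rpow, ← Real.rpow_natCast ((1 - (Real.cos θ)^2) ^ (1/(2:ℝ))) m,
      ← Real.rpow_mul hc1]
    congr 1
    ring
  rw [hrpow, legendre_iteratedDeriv n m, abs_mul]
  have hfac : (0:ℝ) < 2^n * (n.factorial:ℝ) := by positivity
  rw [abs_of_pos (by positivity : (0:ℝ) < 1 / (2^n * (n.factorial:ℝ)))]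
  have hKB := KB n m hm (x := Real.cos θ) ⟨Real.neg_one_le_cos θ, Real.cos_le_one θ⟩
  calc (Real.sqrt (1 - (Real.cos θ)^2))^m *
        (1 / (2^n * (n.factorial:ℝ)) *
          |(Polynomial.derivative^[n+m] (((X : Polynomial ℝ)^2 - 1)^n)).eval (Real.cos θ)|)
      = (1 / (2^n * (n.factorial:ℝ))) * ((Real.sqrt (1 - (Real.cos θ)^2))^m *
          |(Polynomial.derivative^[n+m] (((X : Polynomial ℝ)^2 - 1)^n)).eval (Real.cos θ)|) := by
        ring
    _ ≤ (1 / (2^n * (n.factorial:ℝ))) * (2^n * (n+m).factorial) := by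
        exact mul_le_mul_of_nonneg_left hKB (by positivity)
    _ = ((n+m).factorial : ℝ) / (n.factorial : ℝ) := by
        field_simp

lemma normexp (d : ℤ) (φ : ℝ) : ‖Complex.exp (Complex.I*(d:ℂ)*(φ:ℂ))‖ = 1 := by
  rw [Complex.norm_exp]
  have : (Complex.I*((d : ℤ):ℂ)*(φ:ℝ)).re = 0 := by
    simp [Complex.mul_re]
  rw [this, Real.exp_zero]

lemma fact_ineq_real (n m K : ℕ) (hm : m ≤ n) (hmK : m < K) (hK : 1 ≤ K) :
    Real.sqrt (((n-m).factorial : ℝ) * ((n+m).factorial : ℝ))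
      ≤ Real.sqrt ((K:ℝ)^K) * (n.factorial : ℝ) := by
  have h1 : (n + m).factorial * (n - m).factorial ≤ K^K * (n.factorial * n.factorial) := by
    calc (n + m).factorial * (n - m).factorial ≤ (m+1)^m * (n.factorial * n.factorial) :=
        fact_ineq n m hm
      _ ≤ K^K * (n.factorial * n.factorial) := by
        apply Nat.mul_le_mul_right
        calc (m+1)^m ≤ K^m := Nat.pow_le_pow_left (by omega) m
          _ ≤ K^K := Nat.pow_le_pow_right hK (by omega)
  have h1' : (n-m).factorial * (n+m).factorial ≤ K^K * (n.factorial * n.factorial) := by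
    rw [Nat.mul_comm ((n-m).factorial)]; exact h1
  have h2 : (((n-m).factorial : ℝ) * ((n+m).factorial : ℝ))
      ≤ ((K:ℝ)^K) * ((n.factorial : ℝ) * (n.factorial : ℝ)) := by
    exact_mod_cast h1'
  calc Real.sqrt (((n-m).factorial : ℝ) * ((n+m).factorial : ℝ))
      ≤ Real.sqrt (((K:ℝ)^K) * ((n.factorial : ℝ) * (n.factorial : ℝ))) := Real.sqrt_le_sqrt h2
    _ = Real.sqrt ((K:ℝ)^K) * (n.factorial : ℝ) := by
        rw [Real.sqrt_mul (by positivity)]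
        congr 1
        rw [show ((n.factorial : ℝ) * (n.factorial : ℝ)) = ((n.factorial : ℝ))^2 by ring,
          Real.sqrt_sq (by positivity)]

lemma sqrt_div_mul {a b nf : ℝ} (ha : 0 ≤ a) (hb : 0 < b) (hnf : 0 < nf) :
    Real.sqrt (a/b) * (b/nf) = Real.sqrt (a*b)/nf := by
  rw [show a/b = (a*b)/b^2 by field_simp, Real.sqrt_div (by positivity),
    Real.sqrt_sq hb.le]
  field_simp

lemma common (n : ℕ) (SK a b nf X : ℝ) (ha : 0 ≤ a) (hb : 0 < b) (hnf : 0 < nf)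
    (hX0 : 0 ≤ X) (hX : X ≤ b/nf) (hab : Real.sqrt (a*b)/nf ≤ SK) :
    Real.sqrt ((2*(n:ℝ)+1)/(4*Real.pi) * (a/b)) * X ≤ Real.sqrt (2*(n:ℝ)+1) * SK := by
  have h2n : (0:ℝ) ≤ (2*(n:ℝ)+1)/(4*Real.pi) := by positivity
  have hSK : 0 ≤ SK := le_trans (by positivity) hab
  rw [Real.sqrt_mul h2n]
  calc Real.sqrt ((2*(n:ℝ)+1)/(4*Real.pi)) * Real.sqrt (a/b) * X
      ≤ Real.sqrt ((2*(n:ℝ)+1)/(4*Real.pi)) * (Real.sqrt (a/b) * (b/nf)) := by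
        rw [mul_assoc]
        apply mul_le_mul_of_nonneg_left _ (Real.sqrt_nonneg _)
        exact mul_le_mul_of_nonneg_left hX (Real.sqrt_nonneg _)
    _ = Real.sqrt ((2*(n:ℝ)+1)/(4*Real.pi)) * (Real.sqrt (a*b)/nf) := by
        rw [sqrt_div_mul ha hb hnf]
    _ ≤ Real.sqrt (2*(n:ℝ)+1) * SK := by
        apply mul_le_mul _ hab (by positivity) (Real.sqrt_nonneg _)
        apply Real.sqrt_le_sqrt
        apply div_le_self (by positivity)
        nlinarith [Real.pi_gt_three]

lemma sphHarm_bound (K n : ℕ) (hK : 1 ≤ K) (k : ℤ) (hkn : k.natAbs ≤ n) (hkK : k.natAbs < K)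
    {θ : ℝ} (h0 : 0 ≤ θ) (hπ : θ ≤ Real.pi) (φ : ℝ) :
    ‖sphHarm n k θ φ‖ ≤ Real.sqrt (2*(n:ℝ)+1) * Real.sqrt ((K:ℝ)^K) := by
  set m : ℕ := k.natAbs with hmdef
  have hmn : m ≤ n := hkn
  have hnf : (0:ℝ) < (n.factorial:ℝ) := by positivity
  have hFp : (0:ℝ) < ((n+m).factorial:ℝ) := by positivity
  have hFm : (0:ℝ) < ((n-m).factorial:ℝ) := by positivity
  have hsqKn : Real.sqrt (((n-m).factorial:ℝ) * ((n+m).factorial:ℝ)) / (n.factorial:ℝ)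
      ≤ Real.sqrt ((K:ℝ)^K) := by
    rw [div_le_iff₀ hnf]
    exact fact_ineq_real n m K hmn hkK hK
  have hneg1 : ‖((-1 : ℂ) ^ k)‖ = 1 := by
    rw [norm_zpow]; simp
  have hnorm : ‖sphHarm n k θ φ‖ =
      Real.sqrt ((2*(n:ℝ)+1)/(4*Real.pi) *
        ((intFact ((n:ℤ) - k) : ℝ)/(intFact ((n:ℤ) + k) : ℝ))) *
        |assocLegendre n k (Real.cos θ)| := by
    rw [sphHarm, norm_mul, norm_mul, norm_mul, hneg1, one_mul, normexp k φ, mul_one,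
      Complex.norm_real, Complex.norm_real, Real.norm_eq_abs, Real.norm_eq_abs,
      _root_.abs_of_nonneg (Real.sqrt_nonneg _)]
  rw [hnorm]
  have hc1 : (0:ℝ) ≤ 1 - (Real.cos θ)^2 := by nlinarith [Real.cos_sq_le_one θ]
  rcases Int.natAbs_eq k with hk | hk
  · -- k = m ≥ 0
    have e1 : intFact ((n:ℤ) - k) = (n-m).factorial := by
      have h' : ((n:ℤ) - k).toNat = n - m := by omega
      rw [intFact, h']
    have e2 : intFact ((n:ℤ) + k) = (n+m).factorial := by
      have h' : ((n:ℤ) + k).toNat = n + m := by omega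
      rw [intFact, h']
    have e3 : |assocLegendre n k (Real.cos θ)| ≤ ((n+m).factorial:ℝ)/(n.factorial:ℝ) := by
      rw [assocLegendre, if_pos (by omega : (0:ℤ) ≤ k)]
      have ht : k.toNat = m := by omega
      have hkr : (k:ℝ) = (m:ℝ) := by
        rw [hk]; rw [Int.cast_natCast]
      have hcast : ((k:ℝ)/2) = ((m:ℝ)/2) := by rw [hkr]
      have hrnn : 0 ≤ Real.rpow (1 - Real.cos θ^2) ((m:ℝ)/2) := Real.rpow_nonneg hc1 _
      rw [ht, hcast, abs_mul, _root_.abs_of_nonneg hrnn]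
      exact sinpow_bound n m hmn h0 hπ
    rw [e1, e2]
    exact common n (Real.sqrt ((K:ℝ)^K)) _ _ _ _ hFm.le hFp hnf (abs_nonneg _) e3 hsqKn
  · -- k = -m < 0 (or m = 0)
    by_cases hm0 : m = 0
    · -- then k = 0, same as first case
      have hk0 : k = 0 := by omega
      have e1 : intFact ((n:ℤ) - k) = (n-m).factorial := by
        have h' : ((n:ℤ) - k).toNat = n - m := by omega
        rw [intFact, h']
      have e2 : intFact ((n:ℤ) + k) = (n+m).factorial := by
        have h' : ((n:ℤ) + k).toNat = n + m := by omega
        rw [intFact, h']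
      have e3 : |assocLegendre n k (Real.cos θ)| ≤ ((n+m).factorial:ℝ)/(n.factorial:ℝ) := by
        rw [assocLegendre, if_pos (by omega : (0:ℤ) ≤ k)]
        have ht : k.toNat = m := by omega
        have hkr : (k:ℝ) = (m:ℝ) := by rw [hk0, hm0]; norm_num
        have hcast : ((k:ℝ)/2) = ((m:ℝ)/2) := by rw [hkr]
        have hrnn : 0 ≤ Real.rpow (1 - Real.cos θ^2) ((m:ℝ)/2) := Real.rpow_nonneg hc1 _
        rw [ht, hcast, abs_mul, _root_.abs_of_nonneg hrnn]
        exact sinpow_bound n m hmn h0 hπ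
      rw [e1, e2]
      exact common n (Real.sqrt ((K:ℝ)^K)) _ _ _ _ hFm.le hFp hnf (abs_nonneg _) e3 hsqKn
    · have hkneg : ¬ ((0:ℤ) ≤ k) := by omega
      have e1 : intFact ((n:ℤ) - k) = (n+m).factorial := by
        have h' : ((n:ℤ) - k).toNat = n + m := by omega
        rw [intFact, h']
      have e2 : intFact ((n:ℤ) + k) = (n-m).factorial := by
        have h' : ((n:ℤ) + k).toNat = n - m := by omega
        rw [intFact, h']
      have e3 : |assocLegendre n k (Real.cos θ)| ≤ ((n-m).factorial:ℝ)/(n.factorial:ℝ) := by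
        rw [assocLegendre, if_neg hkneg]
        rw [e2, e1]
        have hrnn : 0 ≤ Real.rpow (1 - Real.cos θ^2) (((k.natAbs:ℕ):ℝ)/2) := Real.rpow_nonneg hc1 _
        rw [abs_mul, abs_mul, abs_mul, _root_.abs_of_nonneg hrnn]
        have habs1 : |((-1:ℝ)) ^ m| = 1 := by
          rw [_root_.abs_pow, _root_.abs_neg, _root_.abs_one, one_pow]
        rw [habs1, one_mul]
        have habs2 : |((n-m).factorial:ℝ)/((n+m).factorial:ℝ)|
            = ((n-m).factorial:ℝ)/((n+m).factorial:ℝ) := by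
          rw [_root_.abs_of_nonneg (by positivity)]
        rw [habs2]
        have hsp := sinpow_bound n m hmn h0 hπ
        calc ((n-m).factorial:ℝ)/((n+m).factorial:ℝ) *
              (Real.rpow (1 - (Real.cos θ)^2) ((m:ℝ)/2) *
                |iteratedDeriv m (legendreP n) (Real.cos θ)|)
            ≤ ((n-m).factorial:ℝ)/((n+m).factorial:ℝ) *
              (((n+m).factorial:ℝ)/(n.factorial:ℝ)) := by
              exact mul_le_mul_of_nonneg_left hsp (by positivity)
          _ = ((n-m).factorial:ℝ)/(n.factorial:ℝ) := by
              field_simp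
      rw [e1, e2]
      have hsqKn' : Real.sqrt (((n+m).factorial:ℝ) * ((n-m).factorial:ℝ)) / (n.factorial:ℝ)
          ≤ Real.sqrt ((K:ℝ)^K) := by
        rw [mul_comm]; exact hsqKn
      exact common n (Real.sqrt ((K:ℝ)^K)) _ _ _ _ hFp.le hFm hnf (abs_nonneg _) e3 hsqKn'

lemma choose_le_two_pow' (p t : ℕ) : Nat.choose p t ≤ 2^p := by
  by_cases h : t ≤ p
  · calc Nat.choose p t ≤ ∑ i ∈ Finset.range (p+1), Nat.choose p i :=
        Finset.single_le_sum (f := fun i => Nat.choose p i) (fun i _ => Nat.zero_le _)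
          (Finset.mem_range.mpr (by omega))
      _ = 2^p := Nat.sum_range_choose p
  · rw [Nat.choose_eq_zero_of_lt (by omega)]
    positivity

lemma zeta_norm_le_one (K n : ℕ) (k : ℤ) : ‖zetaC K n k‖ ≤ 1 := by
  rw [zetaC]
  split
  · rw [norm_mul, norm_mul]
    have h1 : ‖etaK K‖ = 1 := by
      rw [etaK]; split <;> simp
    have h2 : ‖(nuK K k : ℂ)‖ ≤ 1 := by
      rw [nuK]; split <;> simp
    have h3 : ‖(Real.sqrt ((1 / 2 ^ pK K n) *
        (Nat.choose (pK K n) ((((pK K n : ℤ) - k) / 2).toNat) : ℝ)) : ℂ)‖ ≤ 1 := by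
      rw [Complex.norm_real, Real.norm_eq_abs, _root_.abs_of_nonneg (Real.sqrt_nonneg _)]
      have hch : ((Nat.choose (pK K n) ((((pK K n : ℤ) - k) / 2).toNat)) : ℝ) ≤ 2 ^ pK K n := by
        exact_mod_cast choose_le_two_pow' (pK K n) _
      have hp : (0:ℝ) < 2 ^ pK K n := by positivity
      apply Real.sqrt_le_one.mpr
      rw [div_mul_eq_mul_div, one_mul, div_le_one hp]
      exact hch
    calc ‖etaK K‖ * ‖(nuK K k : ℂ)‖ * ‖(Real.sqrt ((1 / 2 ^ pK K n) *
            (Nat.choose (pK K n) ((((pK K n : ℤ) - k) / 2).toNat) : ℝ)) : ℂ)‖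
        ≤ 1 * 1 * 1 :=
          mul_le_mul (mul_le_mul (le_of_eq h1) h2 (norm_nonneg _) zero_le_one) h3
            (norm_nonneg _) (by norm_num)
      _ = 1 := by norm_num
  · simp

lemma zeta_eq_zero (K n : ℕ) (k : ℤ) (h : K ≤ k.natAbs) : zetaC K n k = 0 := by
  rw [zetaC, if_neg (by omega)]

lemma inner_bound (κ : ℝ → ℝ) (M : ℝ) (hM : ∀ t, |κ t| ≤ M) (hM0 : 0 ≤ M)
    (K N n : ℕ) (hK : 1 ≤ K) {θ : ℝ} (h0 : 0 ≤ θ) (hπ : θ ≤ Real.pi) (φ : ℝ) :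
    ‖∑ k ∈ Finset.Icc (-(n:ℤ)) (n:ℤ),
        (Real.sqrt ((2*(n:ℝ)+1)/(8*Real.pi^2)) : ℂ) * (κ ((n:ℝ)/(N:ℝ)) : ℂ) *
          zetaC K n k * sphHarm n k θ φ‖
      ≤ 2*(K:ℝ) * ((2*(n:ℝ)+1) * (M * Real.sqrt ((K:ℝ)^K))) := by
  set B : ℝ := (2*(n:ℝ)+1) * (M * Real.sqrt ((K:ℝ)^K)) with hB
  have hB0 : 0 ≤ B := by positivity
  have step1 : ∀ k ∈ Finset.Icc (-(n:ℤ)) (n:ℤ),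
      ‖(Real.sqrt ((2*(n:ℝ)+1)/(8*Real.pi^2)) : ℂ) * (κ ((n:ℝ)/(N:ℝ)) : ℂ) *
          zetaC K n k * sphHarm n k θ φ‖ ≤ if k.natAbs < K then B else 0 := by
    intro k hk
    by_cases hkK : k.natAbs < K
    · rw [if_pos hkK]
      have hkn : k.natAbs ≤ n := by
        rw [Finset.mem_Icc] at hk
        omega
      rw [norm_mul, norm_mul, norm_mul]
      have h1 : ‖((Real.sqrt ((2*(n:ℝ)+1)/(8*Real.pi^2)) : ℝ) : ℂ)‖ ≤ Real.sqrt (2*(n:ℝ)+1) := by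
        rw [Complex.norm_real, Real.norm_eq_abs, _root_.abs_of_nonneg (Real.sqrt_nonneg _)]
        apply Real.sqrt_le_sqrt
        apply div_le_self (by positivity)
        nlinarith [Real.pi_gt_three]
      have h2 : ‖((κ ((n:ℝ)/(N:ℝ)) : ℝ) : ℂ)‖ ≤ M := by
        rw [Complex.norm_real, Real.norm_eq_abs]; exact hM _
      have h3 := zeta_norm_le_one K n k
      have h4 := sphHarm_bound K n hK k hkn hkK h0 hπ φ
      calc ‖((Real.sqrt ((2*(n:ℝ)+1)/(8*Real.pi^2)) : ℝ) : ℂ)‖ * ‖((κ ((n:ℝ)/(N:ℝ)) : ℝ) : ℂ)‖ *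
            ‖zetaC K n k‖ * ‖sphHarm n k θ φ‖
          ≤ Real.sqrt (2*(n:ℝ)+1) * M * 1 * (Real.sqrt (2*(n:ℝ)+1) * Real.sqrt ((K:ℝ)^K)) := by
            gcongr
      _ = (Real.sqrt (2*(n:ℝ)+1) * Real.sqrt (2*(n:ℝ)+1)) * (M * Real.sqrt ((K:ℝ)^K)) := by
            ring
      _ = B := by
            rw [Real.mul_self_sqrt (by positivity)]
    · rw [if_neg hkK, zeta_eq_zero K n k (by omega)]
      simp
  have hcard : ((Finset.Icc (-(n:ℤ)) (n:ℤ)).filter (fun k => k.natAbs < K)).card ≤ 2*K := by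
    have hsub : (Finset.Icc (-(n:ℤ)) (n:ℤ)).filter (fun k => k.natAbs < K)
        ⊆ Finset.Icc (-(K:ℤ)+1) ((K:ℤ)-1) := by
      intro k hk
      rw [Finset.mem_filter, Finset.mem_Icc] at hk
      rw [Finset.mem_Icc]
      omega
    have h5 := Finset.card_le_card hsub
    rw [Int.card_Icc] at h5
    omega
  calc ‖∑ k ∈ Finset.Icc (-(n:ℤ)) (n:ℤ),
        (Real.sqrt ((2*(n:ℝ)+1)/(8*Real.pi^2)) : ℂ) * (κ ((n:ℝ)/(N:ℝ)) : ℂ) *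
          zetaC K n k * sphHarm n k θ φ‖
      ≤ ∑ k ∈ Finset.Icc (-(n:ℤ)) (n:ℤ),
        ‖(Real.sqrt ((2*(n:ℝ)+1)/(8*Real.pi^2)) : ℂ) * (κ ((n:ℝ)/(N:ℝ)) : ℂ) *
          zetaC K n k * sphHarm n k θ φ‖ := norm_sum_le _ _
    _ ≤ ∑ k ∈ Finset.Icc (-(n:ℤ)) (n:ℤ), (if k.natAbs < K then B else 0) :=
        Finset.sum_le_sum step1
    _ = ∑ k ∈ (Finset.Icc (-(n:ℤ)) (n:ℤ)).filter (fun k => k.natAbs < K), B := by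
        rw [Finset.sum_filter]
    _ = (((Finset.Icc (-(n:ℤ)) (n:ℤ)).filter (fun k => k.natAbs < K)).card : ℝ) * B := by
        rw [Finset.sum_const, nsmul_eq_mul]
    _ ≤ 2*(K:ℝ) * B := by
        apply mul_le_mul_of_nonneg_right _ hB0
        exact_mod_cast hcard

end
end WaveletAux

/-- the sup-norm bound `‖Ψ_K^N‖_∞ ≤ c N²`. -/
theorem wavelet_sup_norm_bound
    (κ : ℝ → ℝ) (K : ℕ) (hK : 1 ≤ K) (hsupp : WindowSupp κ)
    (hbdd : ∃ M : ℝ, ∀ t : ℝ, |κ t| ≤ M) :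
    ∃ c > 0, ∀ N : ℕ, 1 ≤ N → ∀ y ∈ S2, ‖PsiS κ K N y‖ ≤ c * (N : ℝ) ^ 2 := by
  classical
  obtain ⟨M, hM⟩ := hbdd
  have hM0 : (0:ℝ) ≤ M := le_trans (abs_nonneg _) (hM 0)
  have hKr : (1:ℝ) ≤ (K:ℝ) := by exact_mod_cast hK
  have hKK : (0:ℝ) < (K:ℝ)^K := by positivity
  have hsqK : (0:ℝ) < Real.sqrt ((K:ℝ)^K) := Real.sqrt_pos.mpr hKK
  refine ⟨30*(K:ℝ)*(M+1)*Real.sqrt ((K:ℝ)^K), by positivity, ?_⟩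
  intro N hN y _hy
  have hθ0 : 0 ≤ sphTheta y := Real.arccos_nonneg _
  have hθπ : sphTheta y ≤ π := Real.arccos_le_pi _
  have hNpos : (0:ℝ) < (N:ℝ) := by exact_mod_cast hN
  rw [PsiS, Psi]
  have hkz : ∀ n : ℕ, 2*N+1 ≤ n → κ ((n:ℝ)/(N:ℝ)) = 0 := by
    intro n hn
    by_contra hne
    have hmem := hsupp.1 (Function.mem_support.mpr hne)
    have h2 : (n:ℝ)/(N:ℝ) ≤ 2 := hmem.2
    have h3 : (n:ℝ) ≤ 2*(N:ℝ) := by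
      rw [div_le_iff₀ hNpos] at h2
      linarith
    have h4 : (2*(N:ℝ)+1) ≤ (n:ℝ) := by exact_mod_cast hn
    linarith
  have hzero : ∀ n ∉ Finset.range (2*N+1),
      (∑ k ∈ Finset.Icc (-(n:ℤ)) (n:ℤ),
        (Real.sqrt ((2*(n:ℝ)+1)/(8*π^2)) : ℂ) * (κ ((n:ℝ)/(N:ℝ)) : ℂ) *
          zetaC K n k * sphHarm n k (sphTheta y) (sphPhi y)) = 0 := by
    intro n hn
    apply Finset.sum_eq_zero
    intro k _
    have hge : 2*N+1 ≤ n := by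
      by_contra hlt
      exact hn (Finset.mem_range.mpr (by omega))
    rw [hkz n hge]
    simp
  rw [tsum_eq_sum hzero]
  have hIb : ∀ n : ℕ, ‖∑ k ∈ Finset.Icc (-(n:ℤ)) (n:ℤ),
      (Real.sqrt ((2*(n:ℝ)+1)/(8*π^2)) : ℂ) * (κ ((n:ℝ)/(N:ℝ)) : ℂ) *
        zetaC K n k * sphHarm n k (sphTheta y) (sphPhi y)‖
      ≤ 2*(K:ℝ) * ((2*(n:ℝ)+1) * (M * Real.sqrt ((K:ℝ)^K))) := fun n =>
    WaveletAux.inner_bound κ M hM hM0 K N n hK hθ0 hθπ (sphPhi y)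
  calc ‖∑ n ∈ Finset.range (2*N+1), ∑ k ∈ Finset.Icc (-(n:ℤ)) (n:ℤ),
        (Real.sqrt ((2*(n:ℝ)+1)/(8*π^2)) : ℂ) * (κ ((n:ℝ)/(N:ℝ)) : ℂ) *
          zetaC K n k * sphHarm n k (sphTheta y) (sphPhi y)‖
      ≤ ∑ n ∈ Finset.range (2*N+1), ‖∑ k ∈ Finset.Icc (-(n:ℤ)) (n:ℤ),
        (Real.sqrt ((2*(n:ℝ)+1)/(8*π^2)) : ℂ) * (κ ((n:ℝ)/(N:ℝ)) : ℂ) *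
          zetaC K n k * sphHarm n k (sphTheta y) (sphPhi y)‖ := norm_sum_le _ _
    _ ≤ ∑ n ∈ Finset.range (2*N+1), 2*(K:ℝ) * ((2*(n:ℝ)+1) * (M * Real.sqrt ((K:ℝ)^K))) :=
        Finset.sum_le_sum (fun n _ => hIb n)
    _ ≤ ∑ _n ∈ Finset.range (2*N+1), 2*(K:ℝ) * ((2*(2*(N:ℝ))+1) * (M * Real.sqrt ((K:ℝ)^K))) := by
        apply Finset.sum_le_sum
        intro n hn
        have hn' : (n:ℝ) ≤ 2*(N:ℝ) := by
          rw [Finset.mem_range] at hn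
          have : n ≤ 2*N := by omega
          exact_mod_cast this
        have hfac : (0:ℝ) ≤ M * Real.sqrt ((K:ℝ)^K) := by positivity
        gcongr
    _ = ((2*N+1 : ℕ) : ℝ) * (2*(K:ℝ) * ((4*(N:ℝ)+1) * (M * Real.sqrt ((K:ℝ)^K)))) := by
        rw [Finset.sum_const, Finset.card_range, nsmul_eq_mul]
        ring_nf
    _ ≤ 30*(K:ℝ)*(M+1)*Real.sqrt ((K:ℝ)^K) * (N:ℝ)^2 := by
        have hcast : ((2*N+1 : ℕ) : ℝ) = 2*(N:ℝ)+1 := by push_cast; ring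
        rw [hcast]
        have hs := Real.sqrt_nonneg ((K:ℝ)^K)
        have hN1 : (1:ℝ) ≤ (N:ℝ) := by exact_mod_cast hN
        have h1 : (2*(N:ℝ)+1)*(4*(N:ℝ)+1) ≤ 15*(N:ℝ)^2 := by nlinarith
        have h3 : 2*(K:ℝ)*(M*Real.sqrt ((K:ℝ)^K)) ≤ 2*(K:ℝ)*((M+1)*Real.sqrt ((K:ℝ)^K)) := by
          have : M*Real.sqrt ((K:ℝ)^K) ≤ (M+1)*Real.sqrt ((K:ℝ)^K) := by nlinarith
          nlinarith
        calc (2*(N:ℝ)+1) * (2*(K:ℝ) * ((4*(N:ℝ)+1) * (M * Real.sqrt ((K:ℝ)^K))))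
            = ((2*(N:ℝ)+1)*(4*(N:ℝ)+1)) * (2*(K:ℝ)*(M*Real.sqrt ((K:ℝ)^K))) := by ring
          _ ≤ (15*(N:ℝ)^2) * (2*(K:ℝ)*((M+1)*Real.sqrt ((K:ℝ)^K))) := by
              apply mul_le_mul h1 h3 (by positivity) (by positivity)
          _ = 30*(K:ℝ)*(M+1)*Real.sqrt ((K:ℝ)^K) * (N:ℝ)^2 := by ring
end
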